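/- Let λ be a weak composition and κ a weak komposition. Then κ is the kontent of a set-valued weak composition tableau of shape λ if and only if κ is a glide of λ. -/

import Mathlib

/-!
STATEMENT 2: Let λ be a weak composition and κ a weak komposition. Then κ is the kontent of
a set-valued weak composition tableau of shape λ if and only if κ is a glide of λ.

Conventions: positions of (weak) compositions/kompositions are 0-indexed, and the entry
recorded at position `i` counts the tableau entry `i + 1`.
-/

open scoped Classical

/-- The boxes of the Young diagram of a weak composition `lam`. -/
def boxes (lam : List ℕ) : Finset (ℕ × ℕ) :=
  (Finset.range lam.length ×ˢ Finset.range (lam.foldr max 0)).filter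
    (fun p => p.2 < lam.getD p.1 0)

/-- Lexicographic order on boxes. -/
def boxLe (p q : ℕ × ℕ) : Prop := p.1 < q.1 ∨ (p.1 = q.1 ∧ p.2 ≤ q.2)

/-- `T` is a weak composition tableau of shape `lam`. -/
structure IsWeakCompTableau (lam : List ℕ) (T : ℕ × ℕ → ℕ) : Prop where
  pos : ∀ p ∈ boxes lam, 1 ≤ T p
  mono : ∀ p ∈ boxes lam, ∀ q ∈ boxes lam, boxLe p q → T p ≤ T q
  rows : ∀ p ∈ boxes lam, ∀ q ∈ boxes lam, p.1 < q.1 → T p < T q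
  rowBound : ∀ p ∈ boxes lam, T p ≤ p.1 + 1

/-- `T` is a set-valued weak composition tableau of shape `lam`: every box is assigned a
nonempty finite set, and every choice of one element from each box yields a weak composition
tableau of shape `lam`. -/
def IsSetValuedWCT (lam : List ℕ) (T : ℕ × ℕ → Finset ℕ) : Prop :=
  (∀ p ∈ boxes lam, (T p).Nonempty) ∧
  ∀ f : ℕ × ℕ → ℕ, (∀ p ∈ boxes lam, f p ∈ T p) → IsWeakCompTableau lam f

/-- A weak komposition: a weak composition together with a set of marked positions.
(The requirement that marks occur only at nonzero positions is `WKomp.Valid`.) -/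
structure WKomp where
  toList : List ℕ
  marks : Finset ℕ

/-- The marked positions of a weak komposition must be positions with nonzero entry. -/
def WKomp.Valid (k : WKomp) : Prop := ∀ i ∈ k.marks, k.toList.getD i 0 ≠ 0

/-- `k` is the kontent of the set-valued tableau `T` of shape `lam`: its underlying list is
the content of `T` (position `i` counts boxes containing `i+1`), and position `i` is marked
exactly when some box contains `i+1` together with a smaller element. -/
def HasKontent (lam : List ℕ) (T : ℕ × ℕ → Finset ℕ) (k : WKomp) : Prop :=
  (∀ i : ℕ, ((boxes lam).filter (fun p => i + 1 ∈ T p)).card = k.toList.getD i 0) ∧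
  (∀ i : ℕ, i ∈ k.marks ↔ ∃ p ∈ boxes lam, i + 1 ∈ T p ∧ ∃ v ∈ T p, v < i + 1)

/-- The (0-indexed) positions of the nonzero entries of `lam`, in increasing order. -/
def nzPositions (lam : List ℕ) : List ℕ :=
  (List.range lam.length).filter (fun i => lam.getD i 0 ≠ 0)

/-- `k` is a glide of `lam`.  Here `I : ℕ → ℕ` plays the role of the indices
`0 = i_0 < i_1 < ⋯ < i_l` of the definition (as counts of 0-indexed positions): the `j`-th
block consists of the 0-indexed positions in `[I j, I (j+1))`. -/
def IsGlide (k : WKomp) (lam : List ℕ) : Prop :=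
  ∃ I : ℕ → ℕ, I 0 = 0 ∧
    (∀ j < (nzPositions lam).length, I j < I (j + 1)) ∧
    (∀ t : ℕ, I (nzPositions lam).length ≤ t → k.toList.getD t 0 = 0) ∧
    ∀ j < (nzPositions lam).length,
      ((∑ t ∈ Finset.Ico (I j) (I (j + 1)), k.toList.getD t 0)
          = lam.getD ((nzPositions lam).getD j 0) 0
              + (k.marks ∩ Finset.Ico (I j) (I (j + 1))).card) ∧
      (I (j + 1) ≤ (nzPositions lam).getD j 0 + 1) ∧
      (∀ t ∈ Finset.Ico (I j) (I (j + 1)), k.toList.getD t 0 ≠ 0 →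
        (∀ s ∈ Finset.Ico (I j) t, k.toList.getD s 0 = 0) → t ∉ k.marks)
section Aux
variable {lam : List ℕ}

lemma getD_le_foldr_max (lam : List ℕ) (r : ℕ) : lam.getD r 0 ≤ lam.foldr max 0 := by
  induction lam generalizing r with
  | nil => simp
  | cons a l ih =>
    cases r with
    | zero => simp [List.getD]
    | succ n =>
      simp only [List.foldr]
      exact le_trans (ih n) (le_max_right _ _)

lemma mem_boxes {p : ℕ × ℕ} :
    p ∈ boxes lam ↔ p.1 < lam.length ∧ p.2 < lam.getD p.1 0 := by
  constructor
  · intro h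
    simp only [boxes, Finset.mem_filter, Finset.mem_product, Finset.mem_range] at h
    exact ⟨h.1.1, h.2⟩
  · rintro ⟨h1, h2⟩
    simp only [boxes, Finset.mem_filter, Finset.mem_product, Finset.mem_range]
    exact ⟨⟨h1, lt_of_lt_of_le h2 (getD_le_foldr_max lam p.1)⟩, h2⟩

lemma mem_nz {r : ℕ} : r ∈ nzPositions lam ↔ r < lam.length ∧ lam.getD r 0 ≠ 0 := by
  simp [nzPositions, List.mem_filter, List.mem_range]

/-- abbreviations -/
noncomputable def nzl (lam : List ℕ) : ℕ := (nzPositions lam).length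

noncomputable def nz (lam : List ℕ) (j : ℕ) : ℕ := (nzPositions lam).getD j 0

lemma nz_mem {j : ℕ} (hj : j < nzl lam) : nz lam j ∈ nzPositions lam := by
  rw [nz, List.getD_eq_getElem _ _ hj]
  exact List.getElem_mem _

lemma nz_lt_nz {i j : ℕ} (hij : i < j) (hj : j < nzl lam) : nz lam i < nz lam j := by
  have hs : (nzPositions lam).Pairwise (· < ·) :=
    List.Pairwise.filter _ (List.pairwise_lt_range (n := lam.length))
  have hi : i < nzl lam := lt_trans hij hj
  rw [nz, nz, List.getD_eq_getElem _ _ hi, List.getD_eq_getElem _ _ hj]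
  exact List.pairwise_iff_getElem.mp hs i j hi hj hij

lemma nz_surj {r : ℕ} (hr : r ∈ nzPositions lam) : ∃ j < nzl lam, nz lam j = r := by
  obtain ⟨j, hj, hjr⟩ := List.getElem_of_mem hr
  exact ⟨j, hj, by rw [nz, List.getD_eq_getElem _ _ hj, hjr]⟩

lemma nz_le_of_le {i j : ℕ} (hij : i ≤ j) (hj : j < nzl lam) : nz lam i ≤ nz lam j := by
  rcases eq_or_lt_of_le hij with rfl | h
  · exact le_rfl
  · exact le_of_lt (nz_lt_nz h hj)

lemma nz_nonzero {j : ℕ} (hj : j < nzl lam) : lam.getD (nz lam j) 0 ≠ 0 :=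
  (mem_nz.mp (nz_mem hj)).2

lemma nz_lt_length {j : ℕ} (hj : j < nzl lam) : nz lam j < lam.length :=
  (mem_nz.mp (nz_mem hj)).1

lemma box_row_mem_nz {p : ℕ × ℕ} (hp : p ∈ boxes lam) : ∃ j < nzl lam, nz lam j = p.1 := by
  apply nz_surj
  rw [mem_nz]
  refine ⟨(mem_boxes.mp hp).1, ?_⟩
  intro h0
  have := (mem_boxes.mp hp).2
  omega

/-- The boxes in row `nz lam j`. -/
noncomputable def rowBoxes (lam : List ℕ) (j : ℕ) : Finset (ℕ × ℕ) :=
  (boxes lam).filter (fun p => p.1 = nz lam j)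

lemma mem_rowBoxes {j : ℕ} (hj : j < nzl lam) {p : ℕ × ℕ} :
    p ∈ rowBoxes lam j ↔ p.1 = nz lam j ∧ p.2 < lam.getD (nz lam j) 0 := by
  simp only [rowBoxes, Finset.mem_filter, mem_boxes]
  constructor
  · rintro ⟨⟨h1, h2⟩, h3⟩; exact ⟨h3, h3 ▸ h2⟩
  · rintro ⟨h1, h2⟩; exact ⟨⟨h1 ▸ nz_lt_length hj, h1 ▸ h2⟩, h1⟩

lemma rowBoxes_eq {j : ℕ} (hj : j < nzl lam) :
    rowBoxes lam j = {nz lam j} ×ˢ Finset.range (lam.getD (nz lam j) 0) := by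
  ext p
  rw [mem_rowBoxes hj]
  simp only [Finset.mem_product, Finset.mem_singleton, Finset.mem_range]

lemma card_rowBoxes {j : ℕ} (hj : j < nzl lam) :
    (rowBoxes lam j).card = lam.getD (nz lam j) 0 := by
  rw [rowBoxes_eq hj]
  simp

end Aux
section Tab
variable {lam : List ℕ} {T : ℕ × ℕ → Finset ℕ}

noncomputable def pick (T : ℕ × ℕ → Finset ℕ) (x : ℕ × ℕ) : ℕ :=
  if h : (T x).Nonempty then h.choose else 1

lemma pick_mem (hT : IsSetValuedWCT lam T) {x : ℕ × ℕ} (hx : x ∈ boxes lam) :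
    pick T x ∈ T x := by
  have h := hT.1 x hx
  rw [pick, dif_pos h]
  exact h.choose_spec

lemma choice2 (hT : IsSetValuedWCT lam T) {p q : ℕ × ℕ} {v w : ℕ}
    (hv : v ∈ T p) (hw : w ∈ T q) :
    ∃ f : ℕ × ℕ → ℕ, (∀ x ∈ boxes lam, f x ∈ T x) ∧ (p ≠ q → f p = v) ∧ f q = w := by
  refine ⟨fun x => if x = q then w else if x = p then v else pick T x, ?_, ?_, by simp⟩
  · intro x hx
    by_cases h1 : x = q
    · subst h1; simpa using hw
    by_cases h2 : x = p
    · subst h2; simp [h1, hv]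
    · simp only [if_neg h1, if_neg h2]
      exact pick_mem hT hx
  · intro hne
    simp [hne]

lemma val_pos (hT : IsSetValuedWCT lam T) {p : ℕ × ℕ} (hp : p ∈ boxes lam) {v : ℕ}
    (hv : v ∈ T p) : 1 ≤ v := by
  obtain ⟨f, hf, -, hfq⟩ := choice2 hT hv hv
  have := (hT.2 f hf).pos p hp
  omega

lemma val_rowBound (hT : IsSetValuedWCT lam T) {p : ℕ × ℕ} (hp : p ∈ boxes lam) {v : ℕ}
    (hv : v ∈ T p) : v ≤ p.1 + 1 := by
  obtain ⟨f, hf, -, hfq⟩ := choice2 hT hv hv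
  have := (hT.2 f hf).rowBound p hp
  omega

lemma val_lt_val_of_row_lt (hT : IsSetValuedWCT lam T) {p q : ℕ × ℕ}
    (hp : p ∈ boxes lam) (hq : q ∈ boxes lam) (h : p.1 < q.1) {v w : ℕ}
    (hv : v ∈ T p) (hw : w ∈ T q) : v < w := by
  have hne : p ≠ q := fun he => by rw [he] at h; omega
  obtain ⟨f, hf, hfp, hfq⟩ := choice2 hT hv hw
  have := (hT.2 f hf).rows p hp q hq h
  rw [hfp hne, hfq] at this
  exact this

lemma val_le_val_of_col_lt (hT : IsSetValuedWCT lam T) {p q : ℕ × ℕ}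
    (hp : p ∈ boxes lam) (hq : q ∈ boxes lam) (h1 : p.1 = q.1) (h2 : p.2 < q.2) {v w : ℕ}
    (hv : v ∈ T p) (hw : w ∈ T q) : v ≤ w := by
  have hne : p ≠ q := fun he => by rw [he] at h2; omega
  obtain ⟨f, hf, hfp, hfq⟩ := choice2 hT hv hw
  have := (hT.2 f hf).mono p hp q hq (Or.inr ⟨h1, le_of_lt h2⟩)
  rw [hfp hne, hfq] at this
  exact this

noncomputable def rowSup (T : ℕ × ℕ → Finset ℕ) (lam : List ℕ) (j : ℕ) : ℕ :=
  (rowBoxes lam j).sup (fun p => (T p).sup id)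

noncomputable def Ifun (T : ℕ × ℕ → Finset ℕ) (lam : List ℕ) (j : ℕ) : ℕ :=
  (Finset.range (min j (nzl lam))).sup (rowSup T lam)

lemma Ifun_zero : Ifun T lam 0 = 0 := by simp [Ifun]

lemma Ifun_mono {j j' : ℕ} (h : j ≤ j') : Ifun T lam j ≤ Ifun T lam j' :=
  Finset.sup_mono (Finset.range_subset_range.mpr (by omega))

lemma rowSup_le_Ifun {i j : ℕ} (hi : i < j) (hi' : i < nzl lam) :
    rowSup T lam i ≤ Ifun T lam j :=
  Finset.le_sup (Finset.mem_range.mpr (by omega))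

lemma val_le_rowSup {j : ℕ} {p : ℕ × ℕ} (hp : p ∈ rowBoxes lam j) {v : ℕ} (hv : v ∈ T p) :
    v ≤ rowSup T lam j :=
  le_trans (Finset.le_sup (f := id) hv) (Finset.le_sup (f := fun p => (T p).sup id) hp)

lemma rowBoxes_sub {j : ℕ} : rowBoxes lam j ⊆ boxes lam := Finset.filter_subset _ _

lemma val_in_block (hT : IsSetValuedWCT lam T) {j : ℕ} (hj : j < nzl lam)
    {p : ℕ × ℕ} (hp : p ∈ rowBoxes lam j) {v : ℕ} (hv : v ∈ T p) :
    Ifun T lam j < v ∧ v ≤ Ifun T lam (j + 1) := by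
  have hpb : p ∈ boxes lam := rowBoxes_sub hp
  constructor
  · have hv1 : 1 ≤ v := val_pos hT hpb hv
    rw [Ifun]
    rw [Finset.sup_lt_iff (lt_of_lt_of_le (by simp) hv1 : (⊥ : ℕ) < v)]
    intro i hi
    rw [Finset.mem_range] at hi
    rw [rowSup, Finset.sup_lt_iff (lt_of_lt_of_le (by simp) hv1 : (⊥ : ℕ) < v)]
    intro q hq
    rw [Finset.sup_lt_iff (lt_of_lt_of_le (by simp) hv1 : (⊥ : ℕ) < v)]
    intro w hw
    have hqb : q ∈ boxes lam := rowBoxes_sub hq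
    have hqr : q.1 = nz lam i := (Finset.mem_filter.mp hq).2
    have hpr : p.1 = nz lam j := (Finset.mem_filter.mp hp).2
    have : q.1 < p.1 := by
      rw [hqr, hpr]; exact nz_lt_nz (by omega) hj
    exact val_lt_val_of_row_lt hT hqb hpb this hw hv
  · exact le_trans (val_le_rowSup hp hv) (rowSup_le_Ifun (by omega) hj)

lemma row_of_val_in_block (hT : IsSetValuedWCT lam T) {j t : ℕ} (hj : j < nzl lam)
    (h1 : Ifun T lam j ≤ t) (h2 : t < Ifun T lam (j + 1))
    {p : ℕ × ℕ} (hp : p ∈ boxes lam) (hv : t + 1 ∈ T p) : p ∈ rowBoxes lam j := by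
  obtain ⟨i, hi, hir⟩ := box_row_mem_nz hp
  have hpi : p ∈ rowBoxes lam i := Finset.mem_filter.mpr ⟨hp, hir.symm⟩
  obtain ⟨hlo, hhi⟩ := val_in_block hT hi hpi hv
  rcases lt_trichotomy i j with h | rfl | h
  · exfalso
    have := le_trans hhi (Ifun_mono (by omega : i + 1 ≤ j))
    omega
  · exact hpi
  · exfalso
    have := Ifun_mono (T := T) (lam := lam) (by omega : j + 1 ≤ i)
    omega

end Tab
section Forward
variable {lam : List ℕ} {T : ℕ × ℕ → Finset ℕ} {k : WKomp}

noncomputable def nonmin (T : ℕ × ℕ → Finset ℕ) (p : ℕ × ℕ) : Finset ℕ :=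
  (T p).filter (fun v => ∃ w ∈ T p, w < v)

lemma card_nonmin (hne : (T p).Nonempty) : (nonmin T p).card = (T p).card - 1 := by
  have h : nonmin T p = (T p).erase ((T p).min' hne) := by
    ext v
    simp only [nonmin, Finset.mem_filter, Finset.mem_erase]
    constructor
    · rintro ⟨hv, w, hw, hwv⟩
      refine ⟨?_, hv⟩
      intro he
      have := Finset.min'_le (T p) w hw
      omega
    · rintro ⟨hne', hv⟩
      refine ⟨hv, (T p).min' hne, Finset.min'_mem _ _, ?_⟩
      have := Finset.min'_le (T p) v hv
      omega
  rw [h, Finset.card_erase_of_mem (Finset.min'_mem _ _)]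

lemma glide_of_tableau (hT : IsSetValuedWCT lam T) (hK : HasKontent lam T k) :
    IsGlide k lam := by
  obtain ⟨hc, hm⟩ := hK
  refine ⟨Ifun T lam, Ifun_zero, ?_, ?_, ?_⟩
  · -- strict monotonicity
    intro j hj
    have hp : (nz lam j, 0) ∈ rowBoxes lam j := by
      rw [mem_rowBoxes hj]
      exact ⟨rfl, Nat.pos_of_ne_zero (nz_nonzero hj)⟩
    obtain ⟨v, hv⟩ := hT.1 _ (rowBoxes_sub hp)
    have := val_in_block hT hj hp hv
    omega
  · -- vanishing beyond I l
    intro t ht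
    rw [← hc t, Finset.card_eq_zero, Finset.filter_eq_empty_iff]
    intro p hp hv
    obtain ⟨i, hi, hir⟩ := box_row_mem_nz hp
    have hpi : p ∈ rowBoxes lam i := Finset.mem_filter.mpr ⟨hp, hir.symm⟩
    have hb := val_in_block hT hi hpi hv
    have : Ifun T lam (i + 1) ≤ Ifun T lam (nzPositions lam).length := Ifun_mono hi
    omega
  · intro j hj
    refine ⟨?_, ?_, ?_⟩
    · -- the sum condition
      have stepA : ∀ t ∈ Finset.Ico (Ifun T lam j) (Ifun T lam (j + 1)),
          k.toList.getD t 0 = ((rowBoxes lam j).filter (fun p => t + 1 ∈ T p)).card := by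
        intro t ht
        rw [Finset.mem_Ico] at ht
        rw [← hc t]
        congr 1
        ext p
        simp only [Finset.mem_filter]
        constructor
        · rintro ⟨hp, hv⟩
          exact ⟨row_of_val_in_block hT hj ht.1 ht.2 hp hv, hv⟩
        · rintro ⟨hp, hv⟩
          exact ⟨rowBoxes_sub hp, hv⟩
      rw [Finset.sum_congr rfl stepA]
      -- double counting
      have stepB : ∑ t ∈ Finset.Ico (Ifun T lam j) (Ifun T lam (j + 1)),
          ((rowBoxes lam j).filter (fun p => t + 1 ∈ T p)).card
          = ∑ p ∈ rowBoxes lam j,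
            ((Finset.Ico (Ifun T lam j) (Ifun T lam (j + 1))).filter
              (fun t => t + 1 ∈ T p)).card := by
        simp only [Finset.card_filter]
        exact Finset.sum_comm
      rw [stepB]
      have stepC : ∀ p ∈ rowBoxes lam j,
          ((Finset.Ico (Ifun T lam j) (Ifun T lam (j + 1))).filter
              (fun t => t + 1 ∈ T p)).card = (T p).card := by
        intro p hp
        have he : (Finset.Ico (Ifun T lam j) (Ifun T lam (j + 1))).filter
              (fun t => t + 1 ∈ T p) = (T p).image (· - 1) := by
          ext t
          simp only [Finset.mem_filter, Finset.mem_Ico, Finset.mem_image]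
          constructor
          · rintro ⟨⟨h1, h2⟩, hv⟩
            exact ⟨t + 1, hv, by omega⟩
          · rintro ⟨v, hv, rfl⟩
            have h1 : 1 ≤ v := val_pos hT (rowBoxes_sub hp) hv
            have hb := val_in_block hT hj hp hv
            have hveq : v - 1 + 1 = v := by omega
            rw [hveq]
            exact ⟨⟨by omega, by omega⟩, hv⟩
        rw [he, Finset.card_image_of_injOn]
        intro a ha b hb hab
        have ha1 : 1 ≤ a := val_pos hT (rowBoxes_sub hp) ha
        have hb1 : 1 ≤ b := val_pos hT (rowBoxes_sub hp) hb
        simp only at hab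
        omega
      rw [Finset.sum_congr rfl stepC]
      -- split off one per box
      have stepD : ∀ p ∈ rowBoxes lam j, (T p).card = 1 + ((T p).card - 1) := by
        intro p hp
        have := Finset.card_pos.mpr (hT.1 p (rowBoxes_sub hp))
        omega
      rw [Finset.sum_congr rfl stepD, Finset.sum_add_distrib, Finset.sum_const, smul_eq_mul,
        mul_one, card_rowBoxes hj]
      congr 1
      -- excess = number of marks in the block
      have stepE : ∀ p ∈ rowBoxes lam j, (T p).card - 1 = (nonmin T p).card := by
        intro p hp
        rw [card_nonmin (hT.1 p (rowBoxes_sub hp))]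
      rw [Finset.sum_congr rfl stepE]
      have hdisj : ∀ p ∈ rowBoxes lam j, ∀ q ∈ rowBoxes lam j, p ≠ q →
          Disjoint (nonmin T p) (nonmin T q) := by
        intro p hp q hq hpq
        rw [Finset.disjoint_left]
        intro v hvp hvq
        simp only [nonmin, Finset.mem_filter] at hvp hvq
        have hrow : p.1 = q.1 := by
          rw [(mem_rowBoxes hj).mp hp |>.1, (mem_rowBoxes hj).mp hq |>.1]
        have hcol : p.2 ≠ q.2 := by
          intro h
          exact hpq (Prod.ext hrow h)
        rcases lt_or_gt_of_ne hcol with h | h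
        · obtain ⟨hvq1, w, hw, hwv⟩ := hvq
          have := val_le_val_of_col_lt hT (rowBoxes_sub hp) (rowBoxes_sub hq) hrow h hvp.1 hw
          omega
        · obtain ⟨hvp1, w, hw, hwv⟩ := hvp
          have := val_le_val_of_col_lt hT (rowBoxes_sub hq) (rowBoxes_sub hp) hrow.symm h hvq.1 hw
          omega
      rw [← Finset.card_biUnion hdisj]
      have stepU : (rowBoxes lam j).biUnion (nonmin T)
          = (k.marks ∩ Finset.Ico (Ifun T lam j) (Ifun T lam (j + 1))).image (· + 1) := by
        ext v
        simp only [Finset.mem_biUnion, Finset.mem_image, Finset.mem_inter, Finset.mem_Ico]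
        constructor
        · rintro ⟨p, hp, hv⟩
          simp only [nonmin, Finset.mem_filter] at hv
          obtain ⟨hv1, w, hw, hwv⟩ := hv
          have h1 : 1 ≤ v := val_pos hT (rowBoxes_sub hp) hv1
          have hb := val_in_block hT hj hp hv1
          refine ⟨v - 1, ⟨?_, by omega, by omega⟩, by omega⟩
          rw [hm]
          have hveq : v - 1 + 1 = v := by omega
          exact ⟨p, rowBoxes_sub hp, by rw [hveq]; exact hv1, w, hw, by omega⟩
        · rintro ⟨t, ⟨htm, h1, h2⟩, rfl⟩
          obtain ⟨p, hp, hv, w, hw, hwv⟩ := (hm t).mp htm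
          have hpj : p ∈ rowBoxes lam j := row_of_val_in_block hT hj h1 h2 hp hv
          refine ⟨p, hpj, ?_⟩
          simp only [nonmin, Finset.mem_filter]
          exact ⟨hv, w, hw, hwv⟩
      rw [stepU, Finset.card_image_of_injective _ (fun a b h => by omega)]
    · -- the bound I (j+1) ≤ nz j + 1
      apply Finset.sup_le
      intro i hi
      rw [Finset.mem_range] at hi
      apply Finset.sup_le
      intro p hp
      apply Finset.sup_le
      intro v hv
      have h1 : v ≤ p.1 + 1 := val_rowBound hT (rowBoxes_sub hp) hv
      have h2 : p.1 = nz lam i := (Finset.mem_filter.mp hp).2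
      have h3 : nz lam i ≤ nz lam j := nz_le_of_le (by omega) hj
      have h4 : (nzPositions lam).getD j 0 = nz lam j := rfl
      simp only [id]
      omega
    · -- first nonzero entry of a block is unmarked
      intro t ht hne hzero htm
      rw [Finset.mem_Ico] at ht
      obtain ⟨p, hp, hv, v, hvp, hvt⟩ := (hm t).mp htm
      have hpj : p ∈ rowBoxes lam j := row_of_val_in_block hT hj ht.1 ht.2 hp hv
      have hb := val_in_block hT hj hpj hvp
      have h1 : 1 ≤ v := val_pos hT hp hvp
      have hs : v - 1 ∈ Finset.Ico (Ifun T lam j) t := by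
        rw [Finset.mem_Ico]; omega
      have := hzero _ hs
      rw [← hc (v - 1)] at this
      rw [Finset.card_eq_zero, Finset.eq_empty_iff_forall_notMem] at this
      apply this p
      rw [Finset.mem_filter]
      have : v - 1 + 1 = v := by omega
      rw [this]
      exact ⟨hp, hvp⟩

end Forward
section GlideDataSec

def Kv (k : WKomp) (t : ℕ) : ℕ := k.toList.getD t 0

noncomputable def mrk (k : WKomp) (t : ℕ) : ℕ := if t ∈ k.marks then 1 else 0

/-- Bundled glide data. -/
structure GlideData (lam : List ℕ) (k : WKomp) where
  I : ℕ → ℕ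
  hv : k.Valid
  h0 : I 0 = 0
  hmono : ∀ j < nzl lam, I j < I (j + 1)
  hz : ∀ t, I (nzl lam) ≤ t → Kv k t = 0
  hsum : ∀ j < nzl lam, (∑ t ∈ Finset.Ico (I j) (I (j + 1)), Kv k t)
      = lam.getD (nz lam j) 0 + (k.marks ∩ Finset.Ico (I j) (I (j + 1))).card
  hbd : ∀ j < nzl lam, I (j + 1) ≤ nz lam j + 1
  hfirst : ∀ j < nzl lam, ∀ t ∈ Finset.Ico (I j) (I (j + 1)), Kv k t ≠ 0 →
      (∀ s ∈ Finset.Ico (I j) t, Kv k s = 0) → t ∉ k.marks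

variable {lam : List ℕ} {k : WKomp}

lemma mrk_le_Kv (G : GlideData lam k) (t : ℕ) : mrk k t ≤ Kv k t := by
  rw [mrk]
  split_ifs with h
  · exact Nat.pos_of_ne_zero (G.hv t h)
  · omega

lemma mrk_le_one (t : ℕ) : mrk k t ≤ 1 := by
  rw [mrk]; split_ifs <;> omega

lemma Imono' (G : GlideData lam k) {a b : ℕ} (hab : a ≤ b) (hb : b ≤ nzl lam) :
    G.I a ≤ G.I b := by
  induction b with
  | zero =>
    have : a = 0 := by omega
    rw [this]
  | succ n ih =>
    rcases Nat.lt_or_ge a (n + 1) with h | h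
    · have h1 : G.I a ≤ G.I n := ih (by omega) (by omega)
      have h2 : G.I n < G.I (n + 1) := G.hmono n (by omega)
      omega
    · have : a = n + 1 := by omega
      rw [this]

/-- Number of boxes opened strictly before the value `t + 1` in block `j`. -/
noncomputable def GlideData.cc (G : GlideData lam k) (j t : ℕ) : ℕ :=
  ∑ s ∈ Finset.Ico (G.I j) t, (Kv k s - mrk k s)

lemma cc_base (G : GlideData lam k) (j : ℕ) : G.cc j (G.I j) = 0 := by
  simp [GlideData.cc]

lemma cc_succ (G : GlideData lam k) {j t : ℕ} (h : G.I j ≤ t) :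
    G.cc j (t + 1) = G.cc j t + (Kv k t - mrk k t) := by
  rw [GlideData.cc, GlideData.cc, Finset.sum_Ico_succ_top h]

lemma cc_mono (G : GlideData lam k) {j : ℕ} {t t' : ℕ} (h : t ≤ t') : G.cc j t ≤ G.cc j t' :=
  Finset.sum_le_sum_of_subset (Finset.Ico_subset_Ico le_rfl h)

lemma cc_top (G : GlideData lam k) {j : ℕ} (hj : j < nzl lam) :
    G.cc j (G.I (j + 1)) = lam.getD (nz lam j) 0 := by
  have h1 : G.cc j (G.I (j + 1)) + (∑ s ∈ Finset.Ico (G.I j) (G.I (j + 1)), mrk k s)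
      = ∑ s ∈ Finset.Ico (G.I j) (G.I (j + 1)), Kv k s := by
    rw [GlideData.cc, ← Finset.sum_add_distrib]
    apply Finset.sum_congr rfl
    intro s _
    have := mrk_le_Kv G s
    omega
  have h2 : (∑ s ∈ Finset.Ico (G.I j) (G.I (j + 1)), mrk k s)
      = (k.marks ∩ Finset.Ico (G.I j) (G.I (j + 1))).card := by
    rw [Finset.inter_comm, ← Finset.filter_mem_eq_inter, Finset.card_filter]
    apply Finset.sum_congr rfl
    intro s _
    rw [mrk]
  have h3 := G.hsum j hj
  omega

lemma block_unique (G : GlideData lam k) {j j' t : ℕ} (hj : j < nzl lam) (hj' : j' < nzl lam)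
    (h1 : G.I j ≤ t) (h2 : t < G.I (j + 1)) (h1' : G.I j' ≤ t) (h2' : t < G.I (j' + 1)) :
    j = j' := by
  by_contra hne
  rcases lt_or_gt_of_ne hne with h | h
  · have := Imono' G (show j + 1 ≤ j' by omega) (by omega)
    omega
  · have := Imono' G (show j' + 1 ≤ j by omega) (by omega)
    omega

lemma block_exists (G : GlideData lam k) {t : ℕ} (ht : t < G.I (nzl lam)) :
    ∃ j < nzl lam, G.I j ≤ t ∧ t < G.I (j + 1) := by
  suffices h : ∀ n ≤ nzl lam, t < G.I n → ∃ j < n, G.I j ≤ t ∧ t < G.I (j + 1) by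
    obtain ⟨j, hj, hj2⟩ := h (nzl lam) le_rfl ht
    exact ⟨j, hj, hj2⟩
  intro n
  induction n with
  | zero => intro _ h; rw [G.h0] at h; omega
  | succ m ih =>
    intro hm h
    rcases Nat.lt_or_ge t (G.I m) with h' | h'
    · obtain ⟨j, hj, hj2⟩ := ih (by omega) h'
      exact ⟨j, by omega, hj2⟩
    · exact ⟨m, by omega, h', h⟩

lemma nz_inj {j j' : ℕ} (hj : j < nzl lam) (hj' : j' < nzl lam)
    (h : nz lam j = nz lam j') : j = j' := by
  by_contra hne
  rcases lt_or_gt_of_ne hne with hlt | hlt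
  · have := nz_lt_nz hlt hj'; omega
  · have := nz_lt_nz hlt hj; omega

lemma exists_step (f : ℕ → ℕ) {a b c : ℕ} (hab : a ≤ b) (h0 : f a ≤ c) (h1 : c < f b) :
    ∃ t, a ≤ t ∧ t < b ∧ f t ≤ c ∧ c < f (t + 1) := by
  induction b with
  | zero =>
    have ha : a = 0 := by omega
    rw [ha] at h0
    exact absurd h1 (by omega)
  | succ m ih =>
    rcases Nat.lt_or_ge c (f m) with h' | h'
    · rcases Nat.lt_or_ge m a with ha | ha
      · have ha : a = m + 1 := by omega
        rw [ha] at h0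
        exact absurd h1 (by omega)
      · obtain ⟨t, ht⟩ := ih ha h'
        exact ⟨t, ht.1, by omega, ht.2.2⟩
    · rcases Nat.lt_or_ge m a with ha | ha
      · have ha' : a = m + 1 := by omega
        rw [ha'] at h0
        exact absurd h1 (by omega)
      · exact ⟨m, ha, by omega, h', h1⟩

lemma cc_pos_of_marked (G : GlideData lam k) {j t : ℕ} (hj : j < nzl lam) (h1 : G.I j ≤ t) (h2 : t < G.I (j + 1))
    (hm : t ∈ k.marks) : 1 ≤ G.cc j t := by
  by_contra hcc
  push_neg at hcc
  have hcc0 : G.cc j t = 0 := by omega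
  have htS : t ∈ (Finset.Ico (G.I j) (t + 1)).filter (fun s => Kv k s ≠ 0) := by
    rw [Finset.mem_filter, Finset.mem_Ico]
    exact ⟨⟨h1, by omega⟩, G.hv t hm⟩
  obtain ⟨s0, hs0S, hs0min⟩ :=
    Finset.exists_min_image ((Finset.Ico (G.I j) (t + 1)).filter (fun s => Kv k s ≠ 0))
      id ⟨t, htS⟩
  rw [Finset.mem_filter, Finset.mem_Ico] at hs0S
  obtain ⟨⟨hs01, hs02⟩, hs03⟩ := hs0S
  have hs0t : s0 ≤ t := by omega
  have hzero : ∀ s ∈ Finset.Ico (G.I j) s0, Kv k s = 0 := by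
    intro s hs
    rw [Finset.mem_Ico] at hs
    by_contra hne
    have hsS : s ∈ (Finset.Ico (G.I j) (t + 1)).filter (fun s => Kv k s ≠ 0) := by
      rw [Finset.mem_filter, Finset.mem_Ico]
      exact ⟨⟨hs.1, by omega⟩, hne⟩
    have := hs0min s hsS
    simp only [id] at this
    omega
  have hnm : s0 ∉ k.marks :=
    G.hfirst j hj s0 (Finset.mem_Ico.mpr ⟨hs01, by omega⟩) hs03 hzero
  rcases eq_or_lt_of_le hs0t with rfl | hlt
  · exact hnm hm
  · -- s0 < t, so cc j t ≥ Kv s0 - mrk s0 = Kv s0 ≥ 1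
    have hterm : Kv k s0 - mrk k s0 ≤ G.cc j t := by
      apply Finset.single_le_sum (f := fun s => Kv k s - mrk k s)
      · intro i _; omega
      · rw [Finset.mem_Ico]; omega
    have : mrk k s0 = 0 := by rw [mrk, if_neg hnm]
    omega

end GlideDataSec
section Converse
variable {lam : List ℕ} {k : WKomp}

/-- The set-valued tableau constructed from glide data. -/
noncomputable def Tglide (G : GlideData lam k) (p : ℕ × ℕ) : Finset ℕ :=
  ((Finset.range (G.I (nzl lam))).filter (fun t => ∃ j < nzl lam, nz lam j = p.1 ∧
      G.I j ≤ t ∧ t < G.I (j + 1) ∧ G.cc j t - mrk k t ≤ p.2 ∧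
      p.2 < G.cc j t + Kv k t - mrk k t)).image (· + 1)

lemma mem_Tglide (G : GlideData lam k) {p : ℕ × ℕ} {t : ℕ} :
    t + 1 ∈ Tglide G p ↔ t < G.I (nzl lam) ∧ ∃ j < nzl lam, nz lam j = p.1 ∧
      G.I j ≤ t ∧ t < G.I (j + 1) ∧ G.cc j t - mrk k t ≤ p.2 ∧
      p.2 < G.cc j t + Kv k t - mrk k t := by
  simp only [Tglide, Finset.mem_image, Finset.mem_filter, Finset.mem_range]
  constructor
  · rintro ⟨u, ⟨h1, h2⟩, hu⟩
    have : u = t := by omega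
    subst this
    exact ⟨h1, h2⟩
  · rintro ⟨h1, h2⟩
    exact ⟨t, ⟨h1, h2⟩, rfl⟩

lemma Tglide_shape (G : GlideData lam k) {p : ℕ × ℕ} {v : ℕ} (hv : v ∈ Tglide G p) :
    ∃ t, v = t + 1 := by
  simp only [Tglide, Finset.mem_image] at hv
  obtain ⟨t, -, ht⟩ := hv
  exact ⟨t, ht.symm⟩

lemma colHi_le (G : GlideData lam k) {j t : ℕ} (hj : j < nzl lam)
    (h1 : G.I j ≤ t) (h2 : t < G.I (j + 1)) :
    G.cc j t + Kv k t - mrk k t ≤ lam.getD (nz lam j) 0 := by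
  have hs := cc_succ G (j := j) h1
  have hmk := mrk_le_Kv G t
  have hmono := cc_mono G (j := j) (show t + 1 ≤ G.I (j + 1) by omega)
  have htop := cc_top G hj
  omega

lemma box_of_col (G : GlideData lam k) {j t c : ℕ} (hj : j < nzl lam)
    (h1 : G.I j ≤ t) (h2 : t < G.I (j + 1))
    (hc : c < G.cc j t + Kv k t - mrk k t) : (nz lam j, c) ∈ boxes lam := by
  rw [mem_boxes]
  have := colHi_le G hj h1 h2
  exact ⟨nz_lt_length hj, by simp only; omega⟩

lemma mrk_le_cc (G : GlideData lam k) {j t : ℕ} (hj : j < nzl lam)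
    (h1 : G.I j ≤ t) (h2 : t < G.I (j + 1)) : mrk k t ≤ G.cc j t := by
  rcases Nat.eq_zero_or_pos (mrk k t) with h | h
  · omega
  · have htm : t ∈ k.marks := by
      by_contra hn
      rw [mrk, if_neg hn] at h
      omega
    have := cc_pos_of_marked G hj h1 h2 htm
    have := mrk_le_one (k := k) t
    omega

lemma content_Tglide (G : GlideData lam k) (t : ℕ) :
    ((boxes lam).filter (fun p => t + 1 ∈ Tglide G p)).card = Kv k t := by
  rcases Nat.lt_or_ge t (G.I (nzl lam)) with ht | ht
  · obtain ⟨j, hj, hj1, hj2⟩ := block_exists G ht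
    rcases Nat.eq_zero_or_pos (Kv k t) with h0 | h0
    · rw [h0, Finset.card_eq_zero, Finset.filter_eq_empty_iff]
      intro p hp hv
      rw [mem_Tglide] at hv
      obtain ⟨-, j', hj', hr, hb1, hb2, hc1, hc2⟩ := hv
      have hmk := mrk_le_Kv G t
      omega
    · have hmc := mrk_le_cc G hj hj1 hj2
      have hmk := mrk_le_Kv G t
      have heq : (boxes lam).filter (fun p => t + 1 ∈ Tglide G p)
          = {nz lam j} ×ˢ Finset.Ico (G.cc j t - mrk k t)
              (G.cc j t + Kv k t - mrk k t) := by
        ext p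
        simp only [Finset.mem_filter, Finset.mem_product, Finset.mem_singleton,
          Finset.mem_Ico]
        constructor
        · rintro ⟨hp, hv⟩
          rw [mem_Tglide] at hv
          obtain ⟨-, j', hj', hr, hb1, hb2, hc1, hc2⟩ := hv
          have : j' = j := block_unique G hj' hj hb1 hb2 hj1 hj2
          subst this
          exact ⟨hr.symm, hc1, hc2⟩
        · rintro ⟨hr, hc1, hc2⟩
          have hp : p ∈ boxes lam := by
            have := box_of_col G hj hj1 hj2 (c := p.2) hc2
            rwa [show (nz lam j, p.2) = p from Prod.ext hr.symm rfl] at this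
          refine ⟨hp, ?_⟩
          rw [mem_Tglide]
          exact ⟨ht, j, hj, hr.symm, hj1, hj2, hc1, hc2⟩
      rw [heq, Finset.card_product, Finset.card_singleton, Nat.card_Ico]
      omega
  · have h0 : Kv k t = 0 := G.hz t ht
    rw [h0, Finset.card_eq_zero, Finset.filter_eq_empty_iff]
    intro p hp hv
    rw [mem_Tglide] at hv
    omega

lemma marks_Tglide (G : GlideData lam k) (t : ℕ) :
    t ∈ k.marks ↔ ∃ p ∈ boxes lam, t + 1 ∈ Tglide G p ∧
      ∃ v ∈ Tglide G p, v < t + 1 := by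
  constructor
  · intro htm
    have hKt : Kv k t ≠ 0 := G.hv t htm
    have ht : t < G.I (nzl lam) := by
      by_contra h
      exact hKt (G.hz t (by omega))
    obtain ⟨j, hj, hj1, hj2⟩ := block_exists G ht
    have hcc1 : 1 ≤ G.cc j t := cc_pos_of_marked G hj hj1 hj2 htm
    have hmt : mrk k t = 1 := by rw [mrk, if_pos htm]
    -- find the last position before `t` that opened a box
    have hSne : ((Finset.Ico (G.I j) t).filter
        (fun s => Kv k s - mrk k s ≠ 0)).Nonempty := by
      by_contra h
      rw [Finset.not_nonempty_iff_eq_empty, Finset.filter_eq_empty_iff] at h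
      have : G.cc j t = 0 := by
        apply Finset.sum_eq_zero
        intro s hs
        have := h hs
        omega
      omega
    obtain ⟨s0, hs0S, hs0max⟩ := Finset.exists_max_image _ id hSne
    rw [Finset.mem_filter, Finset.mem_Ico] at hs0S
    obtain ⟨⟨hs01, hs02⟩, hs03⟩ := hs0S
    have hccs : G.cc j (s0 + 1) = G.cc j s0 + (Kv k s0 - mrk k s0) := cc_succ G hs01
    have hsplit : G.cc j t = G.cc j (s0 + 1)
        + ∑ s ∈ Finset.Ico (s0 + 1) t, (Kv k s - mrk k s) := by
      rw [GlideData.cc, GlideData.cc,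
        Finset.sum_Ico_consecutive _ (by omega : G.I j ≤ s0 + 1) (by omega : s0 + 1 ≤ t)]
    have hzero : ∑ s ∈ Finset.Ico (s0 + 1) t, (Kv k s - mrk k s) = 0 := by
      apply Finset.sum_eq_zero
      intro s hs
      rw [Finset.mem_Ico] at hs
      by_contra hne
      have hsS : s ∈ (Finset.Ico (G.I j) t).filter (fun s => Kv k s - mrk k s ≠ 0) := by
        rw [Finset.mem_filter, Finset.mem_Ico]
        exact ⟨⟨by omega, hs.2⟩, hne⟩
      have := hs0max s hsS
      simp only [id] at this
      omega
    have hcct : G.cc j (s0 + 1) = G.cc j t := by omega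
    have hmks0 := mrk_le_Kv G s0
    -- the box receiving value `t + 1` as a non-minimal entry
    refine ⟨(nz lam j, G.cc j t - 1), ?_, ?_, s0 + 1, ?_, by omega⟩
    · exact box_of_col G hj hj1 hj2 (by omega)
    · rw [mem_Tglide]
      exact ⟨ht, j, hj, rfl, hj1, hj2, by simp only; omega, by simp only; omega⟩
    · rw [mem_Tglide]
      refine ⟨by omega, j, hj, rfl, by omega, by omega, by simp only; omega,
        by simp only; omega⟩
  · rintro ⟨p, hp, hv, v, hvp, hvlt⟩
    obtain ⟨u, rfl⟩ := Tglide_shape G hvp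
    rw [mem_Tglide] at hv hvp
    obtain ⟨ht, j, hj, hr, hb1, hb2, hc1, hc2⟩ := hv
    obtain ⟨hu, j', hj', hr', hb1', hb2', hc1', hc2'⟩ := hvp
    have hjj : j' = j := nz_inj hj' hj (hr'.trans hr.symm)
    rw [hjj] at hb1' hb2' hc1' hc2'
    have hut : u < t := by omega
    by_contra hn
    have hmt : mrk k t = 0 := by rw [mrk, if_neg hn]
    have hccs : G.cc j (u + 1) = G.cc j u + (Kv k u - mrk k u) := cc_succ G hb1'
    have hmono := cc_mono G (j := j) (show u + 1 ≤ t by omega)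
    have hmku := mrk_le_Kv G u
    omega

lemma Tglide_nonempty (G : GlideData lam k) {p : ℕ × ℕ} (hp : p ∈ boxes lam) :
    (Tglide G p).Nonempty := by
  obtain ⟨j, hj, hr⟩ := box_row_mem_nz hp
  have hc : p.2 < G.cc j (G.I (j + 1)) := by
    rw [cc_top G hj]
    have := (mem_boxes.mp hp).2
    rw [← hr] at this
    exact this
  obtain ⟨t, ht1, ht2, ht3, ht4⟩ := exists_step (G.cc j)
    (le_of_lt (G.hmono j hj)) (by rw [cc_base]; omega) hc
  have hccs : G.cc j (t + 1) = G.cc j t + (Kv k t - mrk k t) := cc_succ G ht1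
  have hmk := mrk_le_Kv G t
  refine ⟨t + 1, ?_⟩
  rw [mem_Tglide]
  have htl : t < G.I (nzl lam) := lt_of_lt_of_le ht2 (Imono' G (by omega) le_rfl)
  exact ⟨htl, j, hj, hr, ht1, ht2, by omega, by omega⟩

lemma Tglide_tableau (G : GlideData lam k) (f : ℕ × ℕ → ℕ)
    (hf : ∀ p ∈ boxes lam, f p ∈ Tglide G p) : IsWeakCompTableau lam f := by
  have key : ∀ p ∈ boxes lam, ∃ t, f p = t + 1 ∧ t < G.I (nzl lam) ∧
      ∃ j < nzl lam, nz lam j = p.1 ∧ G.I j ≤ t ∧ t < G.I (j + 1) ∧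
        G.cc j t - mrk k t ≤ p.2 ∧ p.2 < G.cc j t + Kv k t - mrk k t := by
    intro p hp
    obtain ⟨t, htv⟩ := Tglide_shape G (hf p hp)
    have := hf p hp
    rw [htv, mem_Tglide] at this
    exact ⟨t, htv, this⟩
  have hrows : ∀ p ∈ boxes lam, ∀ q ∈ boxes lam, p.1 < q.1 → f p < f q := by
    intro p hp q hq hpq
    obtain ⟨t, hft, htl, j, hj, hr, hb1, hb2, -, -⟩ := key p hp
    obtain ⟨u, hfu, hul, j', hj', hr', hb1', hb2', -, -⟩ := key q hq
    have hjj : j < j' := by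
      by_contra h
      have := nz_le_of_le (show j' ≤ j by omega) hj
      omega
    have := Imono' G (show j + 1 ≤ j' by omega) (by omega)
    omega
  constructor
  · intro p hp
    obtain ⟨t, hft, -⟩ := key p hp
    omega
  · intro p hp q hq hle
    rcases hle with h | ⟨h1, h2⟩
    · exact le_of_lt (hrows p hp q hq h)
    · rcases Nat.eq_or_lt_of_le h2 with h2' | h2'
      · rw [show p = q from Prod.ext h1 h2']
      · obtain ⟨t, hft, htl, j, hj, hr, hb1, hb2, hc1, hc2⟩ := key p hp
        obtain ⟨u, hfu, hul, j', hj', hr', hb1', hb2', hc1', hc2'⟩ := key q hq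
        have hjj : j' = j := nz_inj hj' hj (hr'.trans (h1 ▸ hr.symm))
        rw [hjj] at hb1' hb2' hc1' hc2'
        rw [hft, hfu]
        by_contra hgt
        have hut : u < t := by omega
        have hccs : G.cc j (u + 1) = G.cc j u + (Kv k u - mrk k u) := cc_succ G hb1'
        have hmono := cc_mono G (j := j) (show u + 1 ≤ t by omega)
        have hmku := mrk_le_Kv G u
        have hmt1 := mrk_le_one (k := k) t
        omega
  · exact hrows
  · intro p hp
    obtain ⟨t, hft, htl, j, hj, hr, hb1, hb2, -, -⟩ := key p hp
    have := G.hbd j hj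
    omega

lemma tableau_of_glide (G : GlideData lam k) :
    ∃ T : ℕ × ℕ → Finset ℕ, IsSetValuedWCT lam T ∧ HasKontent lam T k :=
  ⟨Tglide G, ⟨fun p hp => Tglide_nonempty G hp, fun f hf => Tglide_tableau G f hf⟩,
    fun t => content_Tglide G t, fun t => marks_Tglide G t⟩

end Converse

theorem kontent_iff_glide (lam : List ℕ) (k : WKomp) (hk : k.Valid) :
    (∃ T : ℕ × ℕ → Finset ℕ, IsSetValuedWCT lam T ∧ HasKontent lam T k) ↔
      IsGlide k lam := by
  constructor
  · rintro ⟨T, hT, hK⟩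
    exact glide_of_tableau hT hK
  · rintro ⟨I, h0, hmono, hz, hrest⟩
    exact tableau_of_glide
      ⟨I, hk, h0, hmono, hz, fun j hj => (hrest j hj).1,
        fun j hj => (hrest j hj).2.1, fun j hj => (hrest j hj).2.2⟩
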